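/- Explicit form of the random-walk rate function (nondegenerate case). Assume in addition that w⁺(t)·w⁻(t) > 0 for almost every t ∈ [0,T], and set â(t) := log( (x'(t) + √(x'(t)² + 4w⁺(t)w⁻(t))) / (2w⁺(t)) ). Then I = ∫₀ᵀ ( x'(t)·â(t) + w⁺(t) + w⁻(t) − √(x'(t)² + 4w⁺(t)w⁻(t)) ) dt, as an equality of values in [0, +∞]. -/

import Mathlib

open MeasureTheory
open scoped ENNReal

noncomputable section

/-- `F(a) = ∫₀ᵀ ( a(t)x'(t) − w⁺(t)(e^{a(t)} − 1) − w⁻(t)(e^{−a(t)} − 1) ) dt`. -/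
def Frate (T : ℝ) (x' wp wm : ℝ → ℝ) (a : ℝ → ℝ) : ℝ :=
  ∫ t in Set.Ioc 0 T,
    (a t * x' t - wp t * (Real.exp (a t) - 1) - wm t * (Real.exp (-a t) - 1))

/-- The random-walk rate function
`I = sup { F(a) : a bounded Borel measurable }`, a value in `[0, +∞]`. -/
def Irate (T : ℝ) (x' wp wm : ℝ → ℝ) : EReal :=
  sSup {v : EReal | ∃ a : ℝ → ℝ, Measurable a ∧ (∃ K : ℝ, ∀ t, |a t| ≤ K) ∧
    v = ((Frate T x' wp wm a : ℝ) : EReal)}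

/-- The pointwise maximizer
`â(t) = log((x'(t) + √(x'(t)² + 4w⁺(t)w⁻(t))) / (2w⁺(t)))`. -/
def ahat (x' wp wm : ℝ → ℝ) (t : ℝ) : ℝ :=
  Real.log ((x' t + Real.sqrt ((x' t) ^ 2 + 4 * wp t * wm t)) / (2 * wp t))

/- ## Auxiliary pointwise lemmas -/

lemma rw_key (v p m : ℝ) (hp : 0 < p) (hm : 0 < m) :
    0 < v + Real.sqrt (v ^ 2 + 4 * p * m) ∧
    p * Real.exp (Real.log ((v + Real.sqrt (v ^ 2 + 4 * p * m)) / (2 * p)))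
      = (v + Real.sqrt (v ^ 2 + 4 * p * m)) / 2 ∧
    m * Real.exp (-(Real.log ((v + Real.sqrt (v ^ 2 + 4 * p * m)) / (2 * p))))
      = (Real.sqrt (v ^ 2 + 4 * p * m) - v) / 2 := by
  set s := Real.sqrt (v ^ 2 + 4 * p * m) with hs
  have hs2 : s ^ 2 = v ^ 2 + 4 * p * m := Real.sq_sqrt (by nlinarith [sq_nonneg v])
  have hs0 : 0 ≤ s := Real.sqrt_nonneg _
  have hvs : 0 < v + s := by nlinarith [sq_nonneg (v - s), sq_nonneg (v + s)]
  have hq : 0 < (v + s) / (2 * p) := div_pos hvs (by linarith)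
  have hexp : Real.exp (Real.log ((v + s) / (2 * p))) = (v + s) / (2 * p) :=
    Real.exp_log hq
  refine ⟨hvs, ?_, ?_⟩
  · rw [hexp]; field_simp
  · rw [Real.exp_neg, hexp]
    rw [eq_div_iff (two_ne_zero)]
    field_simp
    nlinarith

/-- `g(t,a) ≤ L(t)` pointwise. -/
lemma rw_upper (v p m a : ℝ) (hp : 0 < p) (hm : 0 < m) :
    a * v - p * (Real.exp a - 1) - m * (Real.exp (-a) - 1) ≤
      v * Real.log ((v + Real.sqrt (v ^ 2 + 4 * p * m)) / (2 * p)) + p + m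
        - Real.sqrt (v ^ 2 + 4 * p * m) := by
  obtain ⟨hvs, hE, hF⟩ := rw_key v p m hp hm
  set s := Real.sqrt (v ^ 2 + 4 * p * m) with hs
  set b := Real.log ((v + s) / (2 * p)) with hb
  have h1 : Real.exp b * (a - b + 1) ≤ Real.exp a := by
    have h := Real.add_one_le_exp (a - b)
    calc Real.exp b * (a - b + 1) ≤ Real.exp b * Real.exp (a - b) := by
          nlinarith [Real.exp_pos b]
      _ = Real.exp a := by rw [← Real.exp_add]; ring_nf
  have h2 : Real.exp (-b) * (b - a + 1) ≤ Real.exp (-a) := by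
    have h := Real.add_one_le_exp (b - a)
    calc Real.exp (-b) * (b - a + 1) ≤ Real.exp (-b) * Real.exp (b - a) := by
          nlinarith [Real.exp_pos (-b)]
      _ = Real.exp (-a) := by rw [← Real.exp_add]; ring_nf
  have h1' : (v + s) / 2 * (a - b + 1) ≤ p * Real.exp a := by
    rw [← hE]
    have := mul_le_mul_of_nonneg_left h1 hp.le
    linarith
  have h2' : (s - v) / 2 * (b - a + 1) ≤ m * Real.exp (-a) := by
    rw [← hF]
    have := mul_le_mul_of_nonneg_left h2 hm.le
    linarith
  nlinarith [h1', h2']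

/-- equality at `a = â`. -/
lemma rw_eqL (v p m : ℝ) (hp : 0 < p) (hm : 0 < m) :
    Real.log ((v + Real.sqrt (v ^ 2 + 4 * p * m)) / (2 * p)) * v
        - p * (Real.exp (Real.log ((v + Real.sqrt (v ^ 2 + 4 * p * m)) / (2 * p))) - 1)
        - m * (Real.exp (-(Real.log ((v + Real.sqrt (v ^ 2 + 4 * p * m)) / (2 * p)))) - 1) =
      v * Real.log ((v + Real.sqrt (v ^ 2 + 4 * p * m)) / (2 * p)) + p + m
        - Real.sqrt (v ^ 2 + 4 * p * m) := by
  obtain ⟨hvs, hE, hF⟩ := rw_key v p m hp hm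
  set s := Real.sqrt (v ^ 2 + 4 * p * m) with hs
  set b := Real.log ((v + s) / (2 * p)) with hb
  linarith

lemma rw_L_nonneg (v p m : ℝ) (hp : 0 < p) (hm : 0 < m) :
    0 ≤ v * Real.log ((v + Real.sqrt (v ^ 2 + 4 * p * m)) / (2 * p)) + p + m
        - Real.sqrt (v ^ 2 + 4 * p * m) := by
  have h := rw_upper v p m 0 hp hm
  simpa using h

/-- nonnegativity of `g` between `0` and `â`. -/
lemma rw_seg (v p m bb : ℝ) (hp : 0 < p) (hm : 0 < m)
    (hb : (0 ≤ bb ∧ bb ≤ Real.log ((v + Real.sqrt (v ^ 2 + 4 * p * m)) / (2 * p))) ∨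
          (Real.log ((v + Real.sqrt (v ^ 2 + 4 * p * m)) / (2 * p)) ≤ bb ∧ bb ≤ 0)) :
    0 ≤ bb * v - p * (Real.exp bb - 1) - m * (Real.exp (-bb) - 1) := by
  obtain ⟨hvs, hE, hF⟩ := rw_key v p m hp hm
  set s := Real.sqrt (v ^ 2 + 4 * p * m) with hs
  set b := Real.log ((v + s) / (2 * p)) with hbdef
  have hL : 0 ≤ v * b + p + m - s := by
    have := rw_upper v p m 0 hp hm
    simp only [Real.exp_zero, neg_zero] at this
    rw [← hs, ← hbdef] at this
    linarith
  obtain ⟨c, hc0, hc1, hbc⟩ : ∃ c : ℝ, 0 ≤ c ∧ c ≤ 1 ∧ bb = c * b := by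
    rcases eq_or_ne b 0 with h0 | h0
    · refine ⟨0, le_refl _, zero_le_one, ?_⟩
      rw [h0] at hb ⊢
      rcases hb with ⟨h1, h2⟩ | ⟨h1, h2⟩ <;> linarith
    · refine ⟨bb / b, ?_, ?_, (div_mul_cancel₀ bb h0).symm⟩
      · rcases hb with ⟨h1, h2⟩ | ⟨h1, h2⟩
        · exact div_nonneg h1 (by rcases h0.lt_or_gt with h|h <;> linarith)
        · have hbneg : b < 0 := by rcases h0.lt_or_gt with h|h <;> linarith
          exact div_nonneg_iff.mpr (Or.inr ⟨h2, hbneg.le⟩)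
      · rcases hb with ⟨h1, h2⟩ | ⟨h1, h2⟩
        · have hbpos : 0 < b := by rcases h0.lt_or_gt with h|h <;> linarith
          exact (div_le_one hbpos).mpr h2
        · have hbneg : b < 0 := by rcases h0.lt_or_gt with h|h <;> linarith
          exact (div_le_one_of_neg hbneg).mpr h1
  subst hbc
  have hcv1 : Real.exp (c * b) ≤ c * Real.exp b + (1 - c) := by
    have h := convexOn_exp.2 (Set.mem_univ b) (Set.mem_univ 0) hc0
      (show (0:ℝ) ≤ 1 - c by linarith) (by ring)
    simpa [smul_eq_mul, Real.exp_zero] using h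
  have hcv2 : Real.exp (-(c * b)) ≤ c * Real.exp (-b) + (1 - c) := by
    have h := convexOn_exp.2 (Set.mem_univ (-b)) (Set.mem_univ 0) hc0
      (show (0:ℝ) ≤ 1 - c by linarith) (by ring)
    simpa [smul_eq_mul, Real.exp_zero, mul_neg, neg_mul] using h
  have e1 : c * ((v + s) / 2) + (1 - c) * p = p * (c * Real.exp b + (1 - c)) := by
    rw [← hE]; ring
  have e2 : c * ((s - v) / 2) + (1 - c) * m = m * (c * Real.exp (-b) + (1 - c)) := by
    rw [← hF]; ring
  have t1 := mul_le_mul_of_nonneg_left hcv1 hp.le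
  have t2 := mul_le_mul_of_nonneg_left hcv2 hm.le
  have t3 := mul_nonneg hc0 hL
  nlinarith [t1, t2, t3, e1, e2]

lemma clamp_between (b n : ℝ) (hn : 0 ≤ n) :
    (0 ≤ max (-n) (min n b) ∧ max (-n) (min n b) ≤ b) ∨
    (b ≤ max (-n) (min n b) ∧ max (-n) (min n b) ≤ 0) := by
  rcases le_or_gt 0 b with hb | hb
  · left
    have h1 : 0 ≤ min n b := le_min hn hb
    have h2 : max (-n) (min n b) = min n b := max_eq_right (by linarith)
    rw [h2]
    exact ⟨h1, min_le_right _ _⟩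
  · right
    have h2 : min n b = b := min_eq_right (by linarith)
    rw [h2]
    exact ⟨le_max_right _ _, max_le (by linarith) hb.le⟩

/- ## Auxiliary functions -/

/-- integrand of `Frate`. -/
def rwG (x' wp wm a : ℝ → ℝ) (t : ℝ) : ℝ :=
  a t * x' t - wp t * (Real.exp (a t) - 1) - wm t * (Real.exp (-a t) - 1)

/-- integrand of the explicit rate. -/
def rwL (x' wp wm : ℝ → ℝ) (t : ℝ) : ℝ :=
  x' t * ahat x' wp wm t + wp t + wm t - Real.sqrt ((x' t) ^ 2 + 4 * wp t * wm t)

/-- truncations of `ahat`. -/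
def rwAN (x' wp wm : ℝ → ℝ) (n : ℕ) (t : ℝ) : ℝ :=
  max (-(n : ℝ)) (min (n : ℝ) (ahat x' wp wm t))

lemma rwG_meas {x' wp wm a : ℝ → ℝ} (hx' : Measurable x') (hwp : Measurable wp)
    (hwm : Measurable wm) (ha : Measurable a) : Measurable (rwG x' wp wm a) := by
  unfold rwG
  exact ((ha.mul hx').sub (hwp.mul ((Real.measurable_exp.comp ha).sub measurable_const))).sub
    (hwm.mul ((Real.measurable_exp.comp ha.neg).sub measurable_const))

lemma ahat_meas {x' wp wm : ℝ → ℝ} (hx' : Measurable x') (hwp : Measurable wp)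
    (hwm : Measurable wm) : Measurable (ahat x' wp wm) := by
  unfold ahat
  exact Real.measurable_log.comp
    ((hx'.add ((hx'.pow_const 2).add ((measurable_const.mul hwp).mul hwm)).sqrt).div
      (measurable_const.mul hwp))

lemma rwL_meas {x' wp wm : ℝ → ℝ} (hx' : Measurable x') (hwp : Measurable wp)
    (hwm : Measurable wm) : Measurable (rwL x' wp wm) := by
  unfold rwL
  exact (((hx'.mul (ahat_meas hx' hwp hwm)).add hwp).add hwm).sub
    ((hx'.pow_const 2).add ((measurable_const.mul hwp).mul hwm)).sqrt

lemma rwAN_meas {x' wp wm : ℝ → ℝ} (hx' : Measurable x') (hwp : Measurable wp)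
    (hwm : Measurable wm) (n : ℕ) : Measurable (rwAN x' wp wm n) := by
  unfold rwAN
  exact measurable_const.max (measurable_const.min (ahat_meas hx' hwp hwm))

lemma rwAN_bd (x' wp wm : ℝ → ℝ) (n : ℕ) (t : ℝ) : |rwAN x' wp wm n t| ≤ (n : ℝ) := by
  unfold rwAN
  rw [abs_le]
  refine ⟨le_max_left _ _, max_le ?_ (min_le_left _ _)⟩
  have : (0:ℝ) ≤ (n:ℝ) := Nat.cast_nonneg n
  linarith

lemma rwG_int (T M : ℝ) (x' wp wm : ℝ → ℝ) (hM : 0 < M)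
    (hx'meas : Measurable x') (hx'int : IntegrableOn x' (Set.Ioc 0 T))
    (hwpmeas : Measurable wp) (hwmmeas : Measurable wm)
    (hwp : ∀ t, wp t ∈ Set.Icc (0:ℝ) M) (hwm : ∀ t, wm t ∈ Set.Icc (0:ℝ) M)
    (a : ℝ → ℝ) (ha : Measurable a) (K : ℝ) (hK : ∀ t, |a t| ≤ K) :
    IntegrableOn (rwG x' wp wm a) (Set.Ioc 0 T) := by
  have hK0 : 0 ≤ K := (abs_nonneg (a 0)).trans (hK 0)
  have hdom : IntegrableOn (fun t => K * |x' t| + 2 * M * (Real.exp K + 1)) (Set.Ioc 0 T) :=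
    (hx'int.abs.const_mul K).add (integrableOn_const measure_Ioc_lt_top.ne)
  apply Integrable.mono' hdom (rwG_meas hx'meas hwpmeas hwmmeas ha).aestronglyMeasurable
  apply Filter.Eventually.of_forall
  intro t
  obtain ⟨hax1, hax2⟩ := abs_le.mp (hK t)
  have hax : |a t * x' t| ≤ K * |x' t| := by
    rw [abs_mul]; exact mul_le_mul_of_nonneg_right (hK t) (abs_nonneg _)
  obtain ⟨haxl, haxr⟩ := abs_le.mp hax
  have e1 : Real.exp (a t) ≤ Real.exp K := Real.exp_le_exp.mpr hax2
  have e2 : Real.exp (-a t) ≤ Real.exp K := Real.exp_le_exp.mpr (by linarith)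
  have e3 := Real.exp_pos (a t)
  have e4 := Real.exp_pos (-a t)
  have hK1 := Real.one_le_exp hK0
  have hb1 : |wp t * (Real.exp (a t) - 1)| ≤ M * (Real.exp K + 1) := by
    rw [abs_mul, abs_of_nonneg (hwp t).1]
    apply mul_le_mul (hwp t).2 ?_ (abs_nonneg _) hM.le
    rw [abs_le]; constructor <;> linarith
  have hb2 : |wm t * (Real.exp (-a t) - 1)| ≤ M * (Real.exp K + 1) := by
    rw [abs_mul, abs_of_nonneg (hwm t).1]
    apply mul_le_mul (hwm t).2 ?_ (abs_nonneg _) hM.le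
    rw [abs_le]; constructor <;> linarith
  obtain ⟨hb1l, hb1r⟩ := abs_le.mp hb1
  obtain ⟨hb2l, hb2r⟩ := abs_le.mp hb2
  rw [Real.norm_eq_abs]
  unfold rwG
  rw [abs_le]
  constructor <;> linarith

/- ## Main theorem -/

theorem rw_rate_explicit (T M : ℝ) (hT : 0 < T) (hM : 0 < M)
    (x x' : ℝ → ℝ) (hx'meas : Measurable x') (hx'int : IntegrableOn x' (Set.Ioc 0 T))
    (hAC : ∀ t ∈ Set.Icc 0 T, x t = x 0 + ∫ s in (0 : ℝ)..t, x' s)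
    (wp wm : ℝ → ℝ) (hwpmeas : Measurable wp) (hwmmeas : Measurable wm)
    (hwp : ∀ t, wp t ∈ Set.Icc (0 : ℝ) M) (hwm : ∀ t, wm t ∈ Set.Icc (0 : ℝ) M)
    (hpos : ∀ᵐ t ∂(volume.restrict (Set.Ioc 0 T)), 0 < wp t * wm t) :
    Irate T x' wp wm =
      (((∫⁻ t in Set.Ioc 0 T,
          ENNReal.ofReal (x' t * ahat x' wp wm t + wp t + wm t
            - Real.sqrt ((x' t) ^ 2 + 4 * wp t * wm t))) : ℝ≥0∞) : EReal) := by
  classical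
  show Irate T x' wp wm =
    (((∫⁻ t in Set.Ioc 0 T, ENNReal.ofReal (rwL x' wp wm t)) : ℝ≥0∞) : EReal)
  have haepos : ∀ᵐ t ∂(volume.restrict (Set.Ioc 0 T)), 0 < wp t ∧ 0 < wm t := by
    filter_upwards [hpos] with t ht
    have h1 := (hwp t).1
    have h2 := (hwm t).1
    constructor <;> nlinarith
  have hle : ∀ a : ℝ → ℝ, ∀ᵐ t ∂(volume.restrict (Set.Ioc 0 T)),
      rwG x' wp wm a t ≤ rwL x' wp wm t := by
    intro a
    filter_upwards [haepos] with t ht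
    exact rw_upper (x' t) (wp t) (wm t) (a t) ht.1 ht.2
  have hL0 : ∀ᵐ t ∂(volume.restrict (Set.Ioc 0 T)), 0 ≤ rwL x' wp wm t := by
    filter_upwards [haepos] with t ht
    exact rw_L_nonneg (x' t) (wp t) (wm t) ht.1 ht.2
  set J : ℝ≥0∞ := ∫⁻ t in Set.Ioc 0 T, ENNReal.ofReal (rwL x' wp wm t) with hJdef
  -- upper bound
  have hub : Irate T x' wp wm ≤ (J : EReal) := by
    unfold Irate
    apply sSup_le
    rintro v ⟨a, hameas, ⟨K, hK⟩, rfl⟩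
    have hint : IntegrableOn (rwG x' wp wm a) (Set.Ioc 0 T) :=
      rwG_int T M x' wp wm hM hx'meas hx'int hwpmeas hwmmeas hwp hwm a hameas K hK
    have hFa : Frate T x' wp wm a = ∫ t in Set.Ioc 0 T, rwG x' wp wm a t := rfl
    have step1 : (∫ t in Set.Ioc 0 T, rwG x' wp wm a t)
        ≤ ∫ t in Set.Ioc 0 T, max (rwG x' wp wm a t) 0 :=
      integral_mono hint hint.pos_part (fun t => le_max_left _ _)
    have step2 : ENNReal.ofReal (∫ t in Set.Ioc 0 T, max (rwG x' wp wm a t) 0)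
        = ∫⁻ t in Set.Ioc 0 T, ENNReal.ofReal (max (rwG x' wp wm a t) 0) :=
      ofReal_integral_eq_lintegral_ofReal hint.pos_part
        (Filter.Eventually.of_forall fun t => le_max_right _ _)
    have step3 : (∫⁻ t in Set.Ioc 0 T, ENNReal.ofReal (max (rwG x' wp wm a t) 0)) ≤ J := by
      rw [hJdef]
      apply lintegral_mono_ae
      filter_upwards [hle a, hL0] with t h1 h2
      exact ENNReal.ofReal_le_ofReal (max_le h1 h2)
    have h1 : ENNReal.ofReal (Frate T x' wp wm a) ≤ J := by
      calc ENNReal.ofReal (Frate T x' wp wm a)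
          ≤ ENNReal.ofReal (∫ t in Set.Ioc 0 T, max (rwG x' wp wm a t) 0) := by
            apply ENNReal.ofReal_le_ofReal
            rw [hFa]; exact step1
        _ = _ := step2
        _ ≤ J := step3
    calc ((Frate T x' wp wm a : ℝ) : EReal)
        ≤ ((ENNReal.ofReal (Frate T x' wp wm a) : ℝ≥0∞) : EReal) := by
          rw [EReal.coe_ennreal_ofReal]
          exact_mod_cast le_max_left _ _
      _ ≤ (J : EReal) := EReal.coe_ennreal_le_coe_ennreal_iff.mpr h1
  -- the truncated sequence
  have haNint : ∀ n : ℕ, IntegrableOn (rwG x' wp wm (rwAN x' wp wm n)) (Set.Ioc 0 T) :=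
    fun n => rwG_int T M x' wp wm hM hx'meas hx'int hwpmeas hwmmeas hwp hwm _
      (rwAN_meas hx'meas hwpmeas hwmmeas n) n (rwAN_bd x' wp wm n)
  have haNmem : ∀ n : ℕ, ((Frate T x' wp wm (rwAN x' wp wm n) : ℝ) : EReal)
      ≤ Irate T x' wp wm := by
    intro n
    unfold Irate
    exact le_sSup ⟨rwAN x' wp wm n, rwAN_meas hx'meas hwpmeas hwmmeas n,
      ⟨(n : ℝ), rwAN_bd x' wp wm n⟩, rfl⟩
  have haNnn : ∀ n : ℕ, ∀ᵐ t ∂(volume.restrict (Set.Ioc 0 T)),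
      0 ≤ rwG x' wp wm (rwAN x' wp wm n) t := by
    intro n
    filter_upwards [haepos] with t ht
    exact rw_seg (x' t) (wp t) (wm t) (rwAN x' wp wm n t) ht.1 ht.2
      (clamp_between (ahat x' wp wm t) (n : ℝ) (Nat.cast_nonneg n))
  have haNtend : ∀ᵐ t ∂(volume.restrict (Set.Ioc 0 T)),
      Filter.Tendsto (fun n => rwG x' wp wm (rwAN x' wp wm n) t) Filter.atTop
        (nhds (rwL x' wp wm t)) := by
    filter_upwards [haepos] with t ht
    have heq : ∀ᶠ n in Filter.atTop, rwG x' wp wm (rwAN x' wp wm n) t = rwL x' wp wm t := by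
      rw [Filter.eventually_atTop]
      refine ⟨⌈|ahat x' wp wm t|⌉₊, fun n hn => ?_⟩
      have hcast : |ahat x' wp wm t| ≤ (n : ℝ) := (Nat.le_ceil _).trans (Nat.cast_le.mpr hn)
      obtain ⟨hc1, hc2⟩ := abs_le.mp hcast
      have haeq : rwAN x' wp wm n t = ahat x' wp wm t := by
        unfold rwAN
        rw [min_eq_right hc2, max_eq_right hc1]
      unfold rwG rwL
      rw [haeq]
      exact rw_eqL (x' t) (wp t) (wm t) ht.1 ht.2
    exact tendsto_const_nhds.congr' (heq.mono fun n h => h.symm)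
  rcases eq_top_or_lt_top J with hJtop | hJlt
  · -- infinite case: Irate = ⊤
    have hFn : ∀ n : ℕ, ENNReal.ofReal (Frate T x' wp wm (rwAN x' wp wm n))
        = ∫⁻ t in Set.Ioc 0 T, ENNReal.ofReal (rwG x' wp wm (rwAN x' wp wm n) t) := fun n =>
      ofReal_integral_eq_lintegral_ofReal (haNint n) (haNnn n)
    have hfatou : J ≤ Filter.liminf
        (fun n : ℕ => ∫⁻ t in Set.Ioc 0 T, ENNReal.ofReal (rwG x' wp wm (rwAN x' wp wm n) t))
        Filter.atTop := by
      have hmeas : ∀ n : ℕ, Measurable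
          (fun t => ENNReal.ofReal (rwG x' wp wm (rwAN x' wp wm n) t)) := fun n =>
        ENNReal.measurable_ofReal.comp
          (rwG_meas hx'meas hwpmeas hwmmeas (rwAN_meas hx'meas hwpmeas hwmmeas n))
      have hFat := lintegral_liminf_le hmeas (μ := volume.restrict (Set.Ioc 0 T)) (u := Filter.atTop)
      refine le_trans (le_of_eq ?_) hFat
      rw [hJdef]
      apply lintegral_congr_ae
      filter_upwards [haNtend] with t htt
      exact (((ENNReal.continuous_ofReal.tendsto _).comp htt).liminf_eq).symm
    have hupn : ∀ r : ℝ, ∃ n : ℕ, r ≤ Frate T x' wp wm (rwAN x' wp wm n) := by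
      intro r
      by_contra hcon
      push_neg at hcon
      have hbd : ∀ n : ℕ, (∫⁻ t in Set.Ioc 0 T,
          ENNReal.ofReal (rwG x' wp wm (rwAN x' wp wm n) t)) ≤ ENNReal.ofReal r := by
        intro n
        rw [← hFn n]
        exact ENNReal.ofReal_le_ofReal (hcon n).le
      have hlim : Filter.liminf
          (fun n : ℕ => ∫⁻ t in Set.Ioc 0 T,
            ENNReal.ofReal (rwG x' wp wm (rwAN x' wp wm n) t)) Filter.atTop
          ≤ ENNReal.ofReal r := by
        calc _ ≤ Filter.liminf (fun _ : ℕ => ENNReal.ofReal r) Filter.atTop :=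
              Filter.liminf_le_liminf (Filter.Eventually.of_forall hbd)
          _ = ENNReal.ofReal r := Filter.liminf_const _
      rw [hJtop] at hfatou
      exact absurd (le_antisymm le_top (hfatou.trans hlim) ▸ ENNReal.ofReal_lt_top)
        (by simp [lt_irrefl])
    have htop : Irate T x' wp wm = ⊤ := by
      unfold Irate
      rw [sSup_eq_top]
      intro b hb
      obtain ⟨c, hbc, hct⟩ := exists_between hb
      have hcb : c ≠ ⊥ := (lt_of_le_of_lt bot_le hbc).ne'
      obtain ⟨n, hn⟩ := hupn c.toReal
      refine ⟨((Frate T x' wp wm (rwAN x' wp wm n) : ℝ) : EReal),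
        ⟨rwAN x' wp wm n, rwAN_meas hx'meas hwpmeas hwmmeas n,
          ⟨(n : ℝ), rwAN_bd x' wp wm n⟩, rfl⟩, ?_⟩
      calc b < c := hbc
        _ = ((c.toReal : ℝ) : EReal) := (EReal.coe_toReal hct.ne hcb).symm
        _ ≤ _ := EReal.coe_le_coe_iff.mpr hn
    rw [htop, hJtop, EReal.coe_ennreal_top]
  · -- finite case
    have hLint : IntegrableOn (rwL x' wp wm) (Set.Ioc 0 T) := by
      refine ⟨(rwL_meas hx'meas hwpmeas hwmmeas).aestronglyMeasurable, ?_⟩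
      rw [hasFiniteIntegral_iff_ofReal hL0]
      rw [← hJdef]
      exact hJlt
    have htendI : Filter.Tendsto (fun n : ℕ => Frate T x' wp wm (rwAN x' wp wm n))
        Filter.atTop (nhds (∫ t in Set.Ioc 0 T, rwL x' wp wm t)) := by
      apply tendsto_integral_of_dominated_convergence (rwL x' wp wm)
        (fun n => (rwG_meas hx'meas hwpmeas hwmmeas
          (rwAN_meas hx'meas hwpmeas hwmmeas n)).aestronglyMeasurable)
        hLint ?_ haNtend
      intro n
      filter_upwards [haNnn n, hle (rwAN x' wp wm n)] with t h1 h2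
      rw [Real.norm_eq_abs, abs_of_nonneg h1]
      exact h2
    have hIJ : ((∫ t in Set.Ioc 0 T, rwL x' wp wm t : ℝ) : EReal) = (J : EReal) := by
      have h := ofReal_integral_eq_lintegral_ofReal hLint hL0
      have h0 : 0 ≤ ∫ t in Set.Ioc 0 T, rwL x' wp wm t := integral_nonneg_of_ae hL0
      rw [hJdef, ← h, EReal.coe_ennreal_ofReal, max_eq_left h0]
    have hlb : (J : EReal) ≤ Irate T x' wp wm := by
      rw [← hIJ]
      exact le_of_tendsto' (EReal.tendsto_coe.mpr htendI) haNmem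
    exact le_antisymm hub hlb

end
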